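/- The number of subgroups of order d in the group (ℤ/d) × (ℤ/d) is σ₁(d). -/

import Mathlib

open AddSubgroup

section Aux

variable (d : ℕ)

/-- The subgroup `{(m a, m b + n c) : m n : ℤ}` of `(ℤ/d)²`. -/
private def Ldef (a b c : ℤ) : AddSubgroup (ZMod d × ZMod d) where
  carrier := {p | ∃ m n : ℤ, p = (((m * a : ℤ) : ZMod d), ((m * b + n * c : ℤ) : ZMod d))}
  zero_mem' := ⟨0, 0, by push_cast; simp; rfl⟩
  add_mem' := by
    rintro p q ⟨m, n, rfl⟩ ⟨m', n', rfl⟩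
    exact ⟨m + m', n + n', by simp only [Prod.mk_add_mk, Prod.neg_mk, Prod.mk.injEq]; push_cast; constructor <;> ring⟩
  neg_mem' := by
    rintro p ⟨m, n, rfl⟩
    exact ⟨-m, -n, by simp only [Prod.mk_add_mk, Prod.neg_mk, Prod.mk.injEq]; push_cast; constructor <;> ring⟩

private lemma mem_Ldef {a b c : ℤ} {p : ZMod d × ZMod d} :
    p ∈ Ldef d a b c ↔
      ∃ m n : ℤ, p = (((m * a : ℤ) : ZMod d), ((m * b + n * c : ℤ) : ZMod d)) :=
  Iff.rfl

private lemma Ldef_shift (a b c k : ℤ) : Ldef d a (b + c * k) c = Ldef d a b c := by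
  ext p
  simp only [mem_Ldef]
  constructor
  · rintro ⟨m, n, rfl⟩
    exact ⟨m, n + m * k, by simp only [Prod.mk_add_mk, Prod.neg_mk, Prod.mk.injEq]; push_cast; refine ⟨trivial, ?_⟩; ring⟩
  · rintro ⟨m, n, rfl⟩
    exact ⟨m, n - m * k, by simp only [Prod.mk_add_mk, Prod.neg_mk, Prod.mk.injEq]; push_cast; refine ⟨trivial, ?_⟩; ring⟩

end Aux

section Aux2
variable {d : ℕ}

private lemma map_fst_Ldef (a b c : ℤ) :
    (Ldef d a b c).map (AddMonoidHom.fst (ZMod d) (ZMod d)) = zmultiples ((a : ZMod d)) := by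
  ext x
  simp only [AddSubgroup.mem_map, mem_Ldef, AddSubgroup.mem_zmultiples_iff]
  constructor
  · rintro ⟨p, ⟨m, n, rfl⟩, rfl⟩
    exact ⟨m, by push_cast; simp [zsmul_eq_mul]⟩
  · rintro ⟨k, rfl⟩
    exact ⟨(((k * a : ℤ) : ZMod d), ((k * b + 0 * c : ℤ) : ZMod d)), ⟨k, 0, rfl⟩,
      by push_cast; simp [zsmul_eq_mul]⟩

private lemma comap_inr_Ldef {a c : ℕ} (ha : 0 < a) (hac : a * c = d) (b : ℤ) :
    (Ldef d a b c).comap (AddMonoidHom.inr (ZMod d) (ZMod d)) = zmultiples ((c : ZMod d)) := by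
  ext y
  simp only [AddSubgroup.mem_comap, AddMonoidHom.inr_apply, mem_Ldef, AddSubgroup.mem_zmultiples_iff,
    Prod.mk.injEq, Prod.ext_iff]
  constructor
  · rintro ⟨m, n, h1, h2⟩
    have hd : ((m * a : ℤ) : ZMod d) = 0 := by rw [← h1]
    rw [ZMod.intCast_zmod_eq_zero_iff_dvd] at hd
    have hca : (c : ℤ) ∣ m := by
      have : ((a : ℤ) * c) ∣ ((a : ℤ) * m) := by
        rw [← hac] at hd; push_cast at hd ⊢; rw [mul_comm (a:ℤ) m]; exact_mod_cast hd
      exact (mul_dvd_mul_iff_left (by exact_mod_cast ha.ne' : (a : ℤ) ≠ 0)).mp this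
    obtain ⟨k, rfl⟩ := hca
    refine ⟨k * b + n, ?_⟩
    rw [h2]; push_cast; rw [zsmul_eq_mul]; push_cast; ring
  · rintro ⟨n, rfl⟩
    exact ⟨0, n, by push_cast; simp [zsmul_eq_mul], by push_cast; rw [zsmul_eq_mul]; push_cast; ring⟩

end Aux2

section Aux3
variable {d : ℕ}

private lemma range_fst_Ldef (a b c : ℤ) :
    ((AddMonoidHom.fst (ZMod d) (ZMod d)).comp (Ldef d a b c).subtype).range
      = zmultiples ((a : ZMod d)) := by
  rw [AddMonoidHom.range_comp, AddSubgroup.range_subtype, map_fst_Ldef]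

private lemma card_Ldef (hd : 0 < d) {a c : ℕ} (hac : a * c = d) (b : ℤ) :
    Nat.card (Ldef d a b c) = d := by
  have ha : 0 < a := by
    rcases Nat.eq_zero_or_pos a with h | h
    · subst h; rw [zero_mul] at hac; omega
    · exact h
  have hc : 0 < c := by
    rcases Nat.eq_zero_or_pos c with h | h
    · subst h; rw [mul_zero] at hac; omega
    · exact h
  have hadvd : a ∣ d := ⟨c, hac.symm⟩
  have hcdvd : c ∣ d := ⟨a, by rw [mul_comm]; exact hac.symm⟩
  set L := Ldef d a b c with hL
  set f : L →+ ZMod d := (AddMonoidHom.fst (ZMod d) (ZMod d)).comp L.subtype with hf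
  -- kernel is equivalent to zmultiples c
  have hker : Nat.card f.ker = a := by
    have memL : ∀ y : zmultiples ((c : ZMod d)), ((0 : ZMod d), (y : ZMod d)) ∈ L := by
      intro y
      have h2 : (↑y : ZMod d) ∈ (Ldef d a b c).comap (AddMonoidHom.inr (ZMod d) (ZMod d)) := by
        rw [comap_inr_Ldef ha hac b]; exact y.2
      simpa [AddSubgroup.mem_comap] using h2
    have memZ : ∀ x : f.ker, (x.1.1.2 : ZMod d) ∈ zmultiples ((c : ZMod d)) := by
      rintro ⟨⟨⟨x1, x2⟩, hx⟩, hk⟩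
      have h0 : x1 = 0 := hk
      rw [← comap_inr_Ldef ha hac b]
      show ((0 : ZMod d), x2) ∈ Ldef d a b c
      rw [← h0]
      exact hx
    have e : f.ker ≃ zmultiples ((c : ZMod d)) :=
      { toFun := fun x => ⟨x.1.1.2, memZ x⟩
        invFun := fun y => ⟨⟨((0 : ZMod d), (y : ZMod d)), memL y⟩, rfl⟩
        left_inv := by
          rintro ⟨⟨⟨x1, x2⟩, hx⟩, hk⟩
          have h0 : x1 = 0 := hk
          simp [h0]
        right_inv := by rintro ⟨y, hy⟩; rfl }
    rw [Nat.card_congr e, Nat.card_zmultiples, ZMod.addOrderOf_coe c hd.ne',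
      Nat.gcd_eq_right hcdvd]
    exact Nat.div_eq_of_eq_mul_left hc hac.symm
  have hrange : Nat.card f.range = c := by
    rw [range_fst_Ldef]
    have : ((a : ℕ) : ZMod d) = ((a : ℤ) : ZMod d) := by push_cast; rfl
    rw [← this, Nat.card_zmultiples, ZMod.addOrderOf_coe a hd.ne',
      Nat.gcd_eq_right hadvd]
    exact Nat.div_eq_of_eq_mul_left ha (by rw [← hac, mul_comm])
  calc Nat.card L = Nat.card (L ⧸ f.ker) * Nat.card f.ker :=
        AddSubgroup.card_eq_card_quotient_mul_card_addSubgroup f.ker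
    _ = Nat.card f.range * Nat.card f.ker :=
        by rw [Nat.card_congr (QuotientAddGroup.quotientKerEquivRange f).toEquiv]
    _ = c * a := by rw [hker, hrange]
    _ = d := by rw [mul_comm]; exact hac

end Aux3

section Aux4
variable {d : ℕ}

/-- Generic: `|L| = |π₁(L)| * |L ∩ ({0}×ℤ/d)|`. -/
private lemma card_split (L : AddSubgroup (ZMod d × ZMod d)) :
    Nat.card L = Nat.card (L.map (AddMonoidHom.fst (ZMod d) (ZMod d))) *
      Nat.card (L.comap (AddMonoidHom.inr (ZMod d) (ZMod d))) := by
  set f : L →+ ZMod d := (AddMonoidHom.fst (ZMod d) (ZMod d)).comp L.subtype with hf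
  have hrange : f.range = L.map (AddMonoidHom.fst (ZMod d) (ZMod d)) := by
    rw [hf, AddMonoidHom.range_comp, AddSubgroup.range_subtype]
  have memK : ∀ x : f.ker, (x.1.1.2 : ZMod d) ∈ L.comap (AddMonoidHom.inr (ZMod d) (ZMod d)) := by
    rintro ⟨⟨⟨x1, x2⟩, hx⟩, hk⟩
    have h0 : x1 = 0 := hk
    show ((0 : ZMod d), x2) ∈ L
    rw [← h0]
    exact hx
  have e : f.ker ≃ L.comap (AddMonoidHom.inr (ZMod d) (ZMod d)) :=
    { toFun := fun x => ⟨x.1.1.2, memK x⟩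
      invFun := fun y => ⟨⟨((0 : ZMod d), (y : ZMod d)), y.2⟩, rfl⟩
      left_inv := by
        rintro ⟨⟨⟨x1, x2⟩, hx⟩, hk⟩
        have h0 : x1 = 0 := hk
        simp [h0]
      right_inv := by rintro ⟨y, hy⟩; rfl }
  calc Nat.card L = Nat.card (L ⧸ f.ker) * Nat.card f.ker :=
        AddSubgroup.card_eq_card_quotient_mul_card_addSubgroup f.ker
    _ = Nat.card f.range * Nat.card f.ker :=
        by rw [Nat.card_congr (QuotientAddGroup.quotientKerEquivRange f).toEquiv]
    _ = _ := by rw [hrange, Nat.card_congr e]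

/-- Every subgroup of `ZMod d` is generated by a divisor of `d`. -/
private lemma exists_eq_zmultiples (hd : 0 < d) (A : AddSubgroup (ZMod d)) :
    ∃ a : ℕ, a ∣ d ∧ A = zmultiples ((a : ZMod d)) := by
  haveI : NeZero d := ⟨hd.ne'⟩
  obtain ⟨g, hg⟩ := IsAddCyclic.exists_generator (α := A)
  set v : ℕ := (g : ZMod d).val with hv
  refine ⟨Nat.gcd d v, Nat.gcd_dvd_left _ _, ?_⟩
  have hA : A = zmultiples ((g : ZMod d)) := by
    ext x
    constructor
    · intro hx
      obtain ⟨k, hk⟩ := hg ⟨x, hx⟩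
      exact ⟨k, congrArg Subtype.val hk⟩
    · rintro ⟨k, rfl⟩
      exact A.zsmul_mem g.2 k
  rw [hA]
  have hgv : ((v : ℕ) : ZMod d) = (g : ZMod d) := ZMod.natCast_rightInverse (g : ZMod d)
  apply le_antisymm
  · rw [AddSubgroup.zmultiples_le]
    obtain ⟨t, ht⟩ := Nat.gcd_dvd_right d v
    refine ⟨(t : ℤ), ?_⟩
    rw [← hgv]
    set e := Nat.gcd d v with he
    rw [ht]
    simp only [zsmul_eq_mul]
    push_cast
    ring
  · rw [AddSubgroup.zmultiples_le]
    refine ⟨Nat.gcdB d v, ?_⟩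
    have key : ((Nat.gcd d v : ℤ) : ZMod d) = ((d * Nat.gcdA d v + v * Nat.gcdB d v : ℤ) : ZMod d) := by
      rw [← Nat.gcd_eq_gcd_ab]
    rw [← hgv]
    push_cast at key ⊢
    rw [zsmul_eq_mul, key]
    simp [ZMod.natCast_self]
    ring

end Aux4

section Aux5
variable {d : ℕ}

private lemma card_zm (hd : 0 < d) {a : ℕ} (ha : a ∣ d) :
    Nat.card (zmultiples (((a : ℤ) : ZMod d))) = d / a := by
  have h : ((a : ℤ) : ZMod d) = ((a : ℕ) : ZMod d) := by push_cast; rfl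
  rw [h, Nat.card_zmultiples, ZMod.addOrderOf_coe a hd.ne', Nat.gcd_eq_right ha]

private lemma Ldef_inj (hd : 0 < d) {a₁ a₂ b₁ b₂ : ℕ} (h₁ : a₁ ∣ d) (h₂ : a₂ ∣ d)
    (hb₁ : b₁ < d / a₁) (hb₂ : b₂ < d / a₂)
    (h : Ldef d a₁ b₁ ((d / a₁ : ℕ) : ℤ) = Ldef d a₂ b₂ ((d / a₂ : ℕ) : ℤ)) : a₁ = a₂ ∧ b₁ = b₂ := by
  have hmap := congrArg (AddSubgroup.map (AddMonoidHom.fst (ZMod d) (ZMod d))) h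
  rw [map_fst_Ldef, map_fst_Ldef] at hmap
  have hcard := congrArg (fun A : AddSubgroup (ZMod d) => Nat.card A) hmap
  simp only [card_zm hd h₁, card_zm hd h₂] at hcard
  have haa : a₁ = a₂ := by
    rw [← Nat.div_div_self h₁ hd.ne', hcard, Nat.div_div_self h₂ hd.ne']
  subst haa
  refine ⟨rfl, ?_⟩
  have ha2 : (a₁ : ℤ) ≠ 0 := by
    have : a₁ ≠ 0 := by rintro rfl; rw [zero_dvd_iff] at h₁; omega
    exact_mod_cast this
  set c' : ℕ := d / a₁ with hc'
  have hmem : (((1 * a₁ : ℤ) : ZMod d), ((1 * b₁ + 0 * c' : ℤ) : ZMod d))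
      ∈ Ldef d a₁ b₁ c' := ⟨1, 0, rfl⟩
  rw [h] at hmem
  obtain ⟨m, n, heq⟩ := hmem
  rw [Prod.mk.injEq] at heq
  obtain ⟨h1, h2⟩ := heq
  push_cast at h1 h2
  have hd1 : (((m - 1) * (a₁ : ℤ)) : ℤ) = (0 : ℤ) ∨ True := Or.inr trivial
  have hz1 : (((m - 1) * (a₁ : ℤ) : ℤ) : ZMod d) = 0 := by
    push_cast
    linear_combination -h1
  rw [ZMod.intCast_zmod_eq_zero_iff_dvd] at hz1
  have hdeq : (d : ℤ) = (a₁ : ℤ) * (c' : ℤ) := by exact_mod_cast (Nat.mul_div_cancel' h₁).symm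
  have hcm : (c' : ℤ) ∣ (m - 1) := by
    have h'' : (d : ℤ) ∣ (a₁ : ℤ) * (m - 1) := by rwa [mul_comm (m - 1) ((a₁ : ℤ))] at hz1
    rw [hdeq] at h''
    exact (mul_dvd_mul_iff_left ha2).mp h''
  have hz2 : (((m * b₂ + n * c' - b₁ : ℤ)) : ZMod d) = 0 := by
    push_cast
    linear_combination -h2
  rw [ZMod.intCast_zmod_eq_zero_iff_dvd] at hz2
  have hcd : (c' : ℤ) ∣ (d : ℤ) := Int.natCast_dvd_natCast.mpr (Nat.div_dvd_of_dvd h₁)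
  obtain ⟨k, hk⟩ := hcm
  obtain ⟨l, hl⟩ := hcd.trans hz2
  have h3 : (c' : ℤ) ∣ ((b₁ : ℤ) - (b₂ : ℤ)) := by
    refine ⟨k * b₂ + n - l, ?_⟩
    linear_combination (b₂ : ℤ) * hk - hl
  have habs : |(b₁ : ℤ) - (b₂ : ℤ)| < (c' : ℤ) := by
    rw [abs_lt]
    constructor <;> omega
  have := Int.eq_zero_of_abs_lt_dvd h3 habs
  omega

end Aux5

section Aux6
variable {d : ℕ}

private lemma card_zm' (hd : 0 < d) {a : ℕ} (ha : a ∣ d) :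
    Nat.card (zmultiples (((a : ℕ) : ZMod d))) = d / a := by
  rw [Nat.card_zmultiples, ZMod.addOrderOf_coe a hd.ne', Nat.gcd_eq_right ha]

private lemma Ldef_surj (hd : 0 < d) (L : AddSubgroup (ZMod d × ZMod d))
    (hL : Nat.card L = d) :
    ∃ a b : ℕ, a ∣ d ∧ b < d / a ∧ L = Ldef d a b ((d / a : ℕ) : ℤ) := by
  haveI : NeZero d := ⟨hd.ne'⟩
  obtain ⟨a, ha, hA⟩ := exists_eq_zmultiples hd (L.map (AddMonoidHom.fst (ZMod d) (ZMod d)))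
  obtain ⟨a', ha', hK⟩ := exists_eq_zmultiples hd (L.comap (AddMonoidHom.inr (ZMod d) (ZMod d)))
  have ha0 : 0 < a := by
    rcases Nat.eq_zero_or_pos a with h | h
    · subst h; rw [zero_dvd_iff] at ha; omega
    · exact h
  have ha'0 : 0 < a' := by
    rcases Nat.eq_zero_or_pos a' with h | h
    · subst h; rw [zero_dvd_iff] at ha'; omega
    · exact h
  have hc0 : 0 < d / a := Nat.div_pos (Nat.le_of_dvd hd ha) ha0
  have hsplit := card_split L
  rw [hL, hA, hK, card_zm' hd ha, card_zm' hd ha'] at hsplit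
  have hda' : d / a' = a := by
    have hda : (d / a) * a = d := by rw [mul_comm]; exact Nat.mul_div_cancel' ha
    exact Nat.eq_of_mul_eq_mul_left hc0 (by rw [← hsplit, hda])
  have hceq : a' = d / a := by rw [← hda', Nat.div_div_self ha' hd.ne']
  rw [hceq] at hK
  set c : ℕ := d / a with hc
  -- pick a point of L above `a`
  have hmemA : ((a : ℕ) : ZMod d) ∈ L.map (AddMonoidHom.fst (ZMod d) (ZMod d)) := by
    rw [hA]; exact ⟨1, one_zsmul _⟩
  rw [AddSubgroup.mem_map] at hmemA
  obtain ⟨p, hp, hp1⟩ := hmemA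
  set y : ZMod d := p.2 with hy
  have hpy : (((a : ℕ) : ZMod d), y) ∈ L := by
    have hpe : (((a : ℕ) : ZMod d), y) = p := by
      rw [hy, ← hp1]
      exact Prod.ext rfl rfl
    rw [hpe]; exact hp
  have h0c : ((0 : ZMod d), ((c : ℕ) : ZMod d)) ∈ L := by
    have hmem : ((c : ℕ) : ZMod d) ∈ L.comap (AddMonoidHom.inr (ZMod d) (ZMod d)) := by
      rw [hK]; exact ⟨1, one_zsmul _⟩
    simpa [AddSubgroup.mem_comap] using hmem
  have hyval : ((y.val : ℕ) : ZMod d) = y := ZMod.natCast_rightInverse y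
  have key : L = Ldef d a ((y.val : ℕ) : ℤ) c := by
    apply le_antisymm
    · intro q hq
      have hq1 : q.1 ∈ L.map (AddMonoidHom.fst (ZMod d) (ZMod d)) :=
        AddSubgroup.mem_map.mpr ⟨q, hq, rfl⟩
      rw [hA] at hq1
      obtain ⟨m, hm⟩ := hq1
      have hm : m • ((a : ℕ) : ZMod d) = q.1 := hm
      have hsub : q - m • (((a : ℕ) : ZMod d), y) ∈ L :=
        AddSubgroup.sub_mem _ hq (AddSubgroup.zsmul_mem _ hpy m)
      have h2 : (q.2 - m • y) ∈ L.comap (AddMonoidHom.inr (ZMod d) (ZMod d)) := by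
        rw [AddSubgroup.mem_comap]
        have hqe : (AddMonoidHom.inr (ZMod d) (ZMod d)) (q.2 - m • y)
            = q - m • (((a : ℕ) : ZMod d), y) := by
          apply Prod.ext
          · show (0 : ZMod d) = q.1 - m • ((a : ℕ) : ZMod d)
            rw [hm]; ring
          · rfl
        rw [hqe]; exact hsub
      rw [hK] at h2
      obtain ⟨n, hn⟩ := h2
      have hn : n • ((c : ℕ) : ZMod d) = q.2 - m • y := hn
      refine ⟨m, n, Prod.ext ?_ ?_⟩
      · show q.1 = (((m * a : ℤ) : ZMod d))
        rw [← hm]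
        push_cast
        rw [zsmul_eq_mul]
      · show q.2 = (((m * y.val + n * c : ℤ) : ZMod d))
        have : q.2 = m • y + n • ((c : ℕ) : ZMod d) := by rw [hn]; ring
        rw [this]
        push_cast
        rw [zsmul_eq_mul, zsmul_eq_mul, hyval]
    · rintro q ⟨m, n, rfl⟩
      have hqe : ((((m * a : ℤ)) : ZMod d), (((m * y.val + n * c : ℤ)) : ZMod d))
          = m • (((a : ℕ) : ZMod d), y) + n • ((0 : ZMod d), ((c : ℕ) : ZMod d)) := by
        apply Prod.ext
        · show (((m * a : ℤ)) : ZMod d) = m • ((a : ℕ) : ZMod d) + n • (0 : ZMod d)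
          push_cast
          rw [zsmul_eq_mul, smul_zero, add_zero]
        · show (((m * y.val + n * c : ℤ)) : ZMod d) = m • y + n • ((c : ℕ) : ZMod d)
          push_cast
          rw [zsmul_eq_mul, zsmul_eq_mul, hyval]
      rw [hqe]
      exact AddSubgroup.add_mem _ (AddSubgroup.zsmul_mem _ hpy m)
        (AddSubgroup.zsmul_mem _ h0c n)
  refine ⟨a, y.val % c, ha, Nat.mod_lt _ hc0, ?_⟩
  rw [key]
  have hsplit2 : ((y.val : ℕ) : ℤ) = ((y.val % c : ℕ) : ℤ) + (c : ℤ) * ((y.val / c : ℕ) : ℤ) := by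
    exact_mod_cast (Nat.mod_add_div y.val c).symm
  rw [hsplit2, Ldef_shift]

end Aux6

/-- The number of subgroups of order `d` in `(ℤ/d) × (ℤ/d)` is `σ₁(d)`. -/
theorem subgroup_count (d : ℕ) (hd : 0 < d) :
    Nat.card {L : AddSubgroup (ZMod d × ZMod d) // Nat.card L = d} =
      ∑ a ∈ d.divisors, a := by
  classical
  let e : ((a : {x // x ∈ d.divisors}) × Fin (d / a.1)) →
      {L : AddSubgroup (ZMod d × ZMod d) // Nat.card L = d} := fun x =>
    ⟨Ldef d x.1.1 x.2.1 ((d / x.1.1 : ℕ) : ℤ), by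
      have hdvd : x.1.1 ∣ d := (Nat.mem_divisors.mp x.1.2).1
      exact card_Ldef hd (Nat.mul_div_cancel' hdvd) _⟩
  have hbij : Function.Bijective e := by
    constructor
    · rintro ⟨⟨a₁, h₁⟩, b₁⟩ ⟨⟨a₂, h₂⟩, b₂⟩ h
      have h' : Ldef d a₁ b₁.1 ((d / a₁ : ℕ) : ℤ) = Ldef d a₂ b₂.1 ((d / a₂ : ℕ) : ℤ) :=
        Subtype.ext_iff.mp h
      obtain ⟨haa, hbb⟩ := Ldef_inj hd (Nat.mem_divisors.mp h₁).1 (Nat.mem_divisors.mp h₂).1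
        b₁.2 b₂.2 h'
      subst haa
      exact Sigma.ext (Subtype.ext rfl) (heq_of_eq (Fin.ext hbb))
    · rintro ⟨L, hL⟩
      obtain ⟨a, b, ha, hb, hLd⟩ := Ldef_surj hd L hL
      exact ⟨⟨⟨a, Nat.mem_divisors.mpr ⟨ha, hd.ne'⟩⟩, ⟨b, hb⟩⟩, Subtype.ext hLd.symm⟩
  rw [← Nat.card_congr (Equiv.ofBijective e hbij)]
  rw [Nat.card_eq_fintype_card, Fintype.card_sigma]
  simp only [Fintype.card_fin]
  rw [Finset.sum_coe_sort d.divisors (fun a => d / a)]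
  exact Nat.sum_div_divisors d id
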